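/- arXiv:cs/0104018 — 2 statements merged into one kernel-verified Lean document; each statement's English description precedes it below -/
import Mathlib

section
/- Fix a natural number j ≥ 0 and real numbers A, B. On ℝ² (i.e., EuclideanSpace ℝ 2), define u(x) = (1/(2π))·‖x‖^{2j}·(A·ln‖x‖ − B) and U(x) = (1/(2π))·‖x‖^{2(j+1)}·(A′·ln‖x‖ − B′), where A′ = A/(4(j+1)²) and B′ = (A/(j+1) + B)/(4(j+1)²). Then at every point x ≠ 0, U is twice differentiable and ΔU(x) = u(x); that is, the higher-order fundamental solutions of the two-dimensional Laplace operator given by these recursion formulas satisfy Δu*_{j+1} = u*_j away from the origin. -/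
open scoped RealInnerProductSpace

lemma main_id (j : ℕ) (A B c r : ℝ) (hr : 0 < r) :
    4 * (c * (r^2)^j * ((((j:ℝ)+1) * (A/(8*((j:ℝ)+1)^2))) * Real.log (r^2)
        + (A/(8*((j:ℝ)+1)^2) - ((j:ℝ)+1) * ((A/((j:ℝ)+1)+B)/(4*((j:ℝ)+1)^2)))))
    + 4 * r^2 * (c * ((j:ℝ) * (r^2)^(j-1)) * ((((j:ℝ)+1) * (A/(8*((j:ℝ)+1)^2))) * Real.log (r^2)
        + (A/(8*((j:ℝ)+1)^2) - ((j:ℝ)+1) * ((A/((j:ℝ)+1)+B)/(4*((j:ℝ)+1)^2))))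
      + (c*(r^2)^j) * ((((j:ℝ)+1) * (A/(8*((j:ℝ)+1)^2))) * (r^2)⁻¹))
    = c * r^(2*j) * (A * Real.log r - B) := by
  have hK : ((j:ℝ)+1) ≠ 0 := by positivity
  rw [pow_mul, Real.log_pow]
  push_cast
  cases j with
  | zero => simp; field_simp; ring
  | succ m =>
    have h1 : (r^2)^(m+1-1) = (r^2)^m := by norm_num
    rw [h1]
    have h2 : (r^2)^(m+1) = (r^2)^m * r^2 := pow_succ _ _
    rw [h2]
    push_cast
    field_simp
    ring

noncomputable section

section Aux
set_option linter.unusedSectionVars false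
variable {E : Type*} [NormedAddCommGroup E] [InnerProductSpace ℝ E] [CompleteSpace E]

lemma sq_fderiv (y : E) :
    HasFDerivAt (fun z : E => (⟪z, z⟫ : ℝ)) ((2:ℝ) • innerSL ℝ y) y := by
  have h := (hasFDerivAt_id y).inner ℝ (hasFDerivAt_id y)
  refine h.congr_fderiv ?_
  ext v
  simp [real_inner_comm]
  ring

lemma grad_of_fderiv {f : E → ℝ} {g : E} {x : E} {D : E →L[ℝ] ℝ}
    (h : HasFDerivAt f D x) (hD : ∀ v, D v = ⟪g, v⟫) : HasGradientAt f g x := by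
  have := hasFDerivAt_iff_hasGradientAt.mp h
  convert this using 1
  apply (InnerProductSpace.toDual ℝ E).injective
  rw [LinearIsometryEquiv.apply_symm_apply]
  ext v
  simp [InnerProductSpace.toDual_apply_apply, hD v]
end Aux

-- derivative of g(t) = c t^(j+1) (a log t - b) at t = s > 0
lemma hasDerivAt_g (c a b : ℝ) (j : ℕ) {s : ℝ} (hs : 0 < s) :
    HasDerivAt (fun t : ℝ => c * t ^ (j+1) * (a * Real.log t - b))
      (c * s ^ j * ((((j:ℝ)+1) * a) * Real.log s + (a - ((j:ℝ)+1) * b))) s := by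
  have h1 : HasDerivAt (fun t : ℝ => c * t ^ (j+1)) (c * (((j:ℝ)+1) * s ^ j)) s := by
    have := (hasDerivAt_pow (j+1) s).const_mul c
    simpa using this
  have h2 : HasDerivAt (fun t : ℝ => a * Real.log t - b) (a * s⁻¹) s :=
    ((Real.hasDerivAt_log hs.ne').const_mul a).sub_const b
  have h := h1.mul h2
  refine h.congr_deriv ?_
  rw [pow_succ]
  field_simp
  ring

lemma hasDerivAt_g1 (c P Q : ℝ) (j : ℕ) {s : ℝ} (hs : 0 < s) :
    HasDerivAt (fun t : ℝ => c * t ^ j * (P * Real.log t + Q))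
      (c * ((j:ℝ) * s ^ (j-1)) * (P * Real.log s + Q) + (c * s ^ j) * (P * s⁻¹)) s := by
  have h1 : HasDerivAt (fun t : ℝ => c * t ^ j) (c * ((j:ℝ) * s ^ (j-1))) s :=
    (hasDerivAt_pow j s).const_mul c
  have h2 : HasDerivAt (fun t : ℝ => P * Real.log t + Q) (P * s⁻¹) s :=
    ((Real.hasDerivAt_log hs.ne').const_mul P).add_const Q
  exact h1.mul h2


/-- One step of the recursion for the higher-order fundamental solutions of the 2D Laplace
operator: with `u(x) = (1/(2π))·‖x‖^(2j)·(A·ln‖x‖ − B)` and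
`U(x) = (1/(2π))·‖x‖^(2(j+1))·(A′·ln‖x‖ − B′)`, where `A′ = A/(4(j+1)²)` and
`B′ = (A/(j+1) + B)/(4(j+1)²)`, the function `U` is twice differentiable away from the origin
and `ΔU = u` there (the Laplacian being the trace of the second derivative). -/
theorem stmt7 (j : ℕ) (A B : ℝ) (u U : EuclideanSpace ℝ (Fin 2) → ℝ)
    (hu : ∀ x : EuclideanSpace ℝ (Fin 2),
      u x = (1 / (2 * Real.pi)) * ‖x‖ ^ (2 * j) * (A * Real.log ‖x‖ - B))
    (hU : ∀ x : EuclideanSpace ℝ (Fin 2),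
      U x = (1 / (2 * Real.pi)) * ‖x‖ ^ (2 * (j + 1)) *
        ((A / (4 * ((j : ℝ) + 1) ^ 2)) * Real.log ‖x‖
          - (A / ((j : ℝ) + 1) + B) / (4 * ((j : ℝ) + 1) ^ 2))) :
    ∀ x : EuclideanSpace ℝ (Fin 2), x ≠ 0 →
      DifferentiableAt ℝ U x ∧ DifferentiableAt ℝ (gradient U) x ∧
      LinearMap.trace ℝ (EuclideanSpace ℝ (Fin 2))
        (fderiv ℝ (gradient U) x).toLinearMap = u x := by
  set c : ℝ := 1 / (2 * Real.pi) with hc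
  set K : ℝ := (j : ℝ) + 1 with hK
  have hK0 : K ≠ 0 := by positivity
  set a : ℝ := A / (8 * K ^ 2) with ha
  set b : ℝ := (A / K + B) / (4 * K ^ 2) with hb
  set P : ℝ := K * a with hP
  set Q : ℝ := a - K * b with hQ
  have hpos : ∀ y : EuclideanSpace ℝ (Fin 2), y ≠ 0 → (0:ℝ) < ⟪y, y⟫ := by
    intro y hy
    rw [real_inner_self_eq_norm_sq]
    exact pow_pos (norm_pos_iff.mpr hy) 2
  -- U as a function of ⟪y,y⟫
  have hUeq : U = fun y : EuclideanSpace ℝ (Fin 2) =>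
      c * (⟪y, y⟫ : ℝ) ^ (j+1) * (a * Real.log ⟪y, y⟫ - b) := by
    funext y
    rw [hU y, real_inner_self_eq_norm_sq]
    rcases eq_or_ne y 0 with rfl | hy
    · simp
    · have hny : (0:ℝ) < ‖y‖ := norm_pos_iff.mpr hy
      rw [Real.log_pow, ← pow_mul]
      push_cast
      have h1 : a * ((2:ℝ) * Real.log ‖y‖) = (A / (4 * K ^ 2)) * Real.log ‖y‖ := by
        rw [ha]; field_simp; ring
      rw [h1]
  set g1 : ℝ → ℝ := fun t => c * t ^ j * (P * Real.log t + Q) with hg1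
  set g2 : ℝ → ℝ := fun t =>
    c * ((j:ℝ) * t ^ (j-1)) * (P * Real.log t + Q) + (c * t ^ j) * (P * t⁻¹) with hg2
  -- gradient of U at any nonzero point
  have key : ∀ y : EuclideanSpace ℝ (Fin 2), y ≠ 0 →
      HasGradientAt U ((2 * g1 ⟪y, y⟫) • y) y := by
    intro y hy
    have hs : (0:ℝ) < ⟪y, y⟫ := hpos y hy
    have hd : HasFDerivAt U ((g1 ⟪y, y⟫) • ((2:ℝ) • innerSL ℝ y)) y := by
      rw [hUeq]
      have h0 := HasDerivAt.comp_hasFDerivAt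
        (f := fun z : EuclideanSpace ℝ (Fin 2) => (⟪z, z⟫ : ℝ)) y
        (hasDerivAt_g c a b j hs) (sq_fderiv y)
      exact h0
    refine grad_of_fderiv hd ?_
    intro v
    simp only [ContinuousLinearMap.coe_smul', Pi.smul_apply, innerSL_apply_apply,
      real_inner_smul_left, smul_eq_mul]
    ring
  intro x hx
  have hs : (0:ℝ) < ⟪x, x⟫ := hpos x hx
  set s : ℝ := (⟪x, x⟫ : ℝ) with hsdef
  set G : EuclideanSpace ℝ (Fin 2) → EuclideanSpace ℝ (Fin 2) :=
    fun y => (2 * g1 ⟪y, y⟫) • y with hG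
  have hnhd : {y : EuclideanSpace ℝ (Fin 2) | y ≠ 0} ∈ nhds x :=
    isOpen_compl_singleton.mem_nhds (by simpa using hx)
  have hev : gradient U =ᶠ[nhds x] G := by
    filter_upwards [hnhd] with y hy
    exact (key y hy).gradient
  -- derivative of G at x
  have hcpart : HasFDerivAt (fun y : EuclideanSpace ℝ (Fin 2) => 2 * g1 ⟪y, y⟫)
      ((2 * g2 s) • ((2:ℝ) • innerSL ℝ x)) x := by
    have h1 := HasDerivAt.comp_hasFDerivAt
      (f := fun z : EuclideanSpace ℝ (Fin 2) => (⟪z, z⟫ : ℝ)) x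
      (hasDerivAt_g1 c P Q j hs) (sq_fderiv x)
    have h2 := h1.const_mul (2:ℝ)
    rw [show (2 * g2 s) • ((2:ℝ) • innerSL ℝ x)
        = (2:ℝ) • (g2 s • ((2:ℝ) • innerSL ℝ x)) from mul_smul 2 (g2 s) _]
    exact h2
  have hGd : HasFDerivAt G
      ((2 * g1 s) • ContinuousLinearMap.id ℝ (EuclideanSpace ℝ (Fin 2))
        + ((2 * g2 s) • ((2:ℝ) • innerSL ℝ x)).smulRight x) x := by
    have h3 := hcpart.smul (hasFDerivAt_id x)
    exact h3
  refine ⟨(key x hx).differentiableAt, hGd.differentiableAt.congr_of_eventuallyEq hev, ?_⟩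
  have hfd : fderiv ℝ (gradient U) x = _ := hev.fderiv_eq.trans hGd.fderiv
  rw [hfd]
  rw [LinearMap.trace_eq_matrix_trace ℝ ((EuclideanSpace.basisFun (Fin 2) ℝ).toBasis)]
  rw [Matrix.trace, Fin.sum_univ_two]
  simp only [Matrix.diag_apply, LinearMap.toMatrix_apply, ContinuousLinearMap.coe_coe,
    OrthonormalBasis.coe_toBasis, OrthonormalBasis.coe_toBasis_repr_apply,
    EuclideanSpace.basisFun_apply, EuclideanSpace.basisFun_repr,
    ContinuousLinearMap.add_apply, ContinuousLinearMap.coe_smul', Pi.smul_apply,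
    ContinuousLinearMap.id_apply, ContinuousLinearMap.smulRight_apply,
    innerSL_apply_apply, smul_eq_mul]
  have hr : (0:ℝ) < ‖x‖ := norm_pos_iff.mpr hx
  have hsr : s = ‖x‖ ^ 2 := by rw [hsdef]; exact real_inner_self_eq_norm_sq x
  have hx0 : x 0 * x 0 + x 1 * x 1 = s := by
    rw [hsdef]
    simp [PiLp.inner_apply, Fin.sum_univ_two]
    rw [EuclideanSpace.norm_eq, Real.sq_sqrt (by positivity), Fin.sum_univ_two]
    simp [sq]
  have hsingle : ∀ i : Fin 2, (⟪x, EuclideanSpace.single i 1⟫ : ℝ) = x i := by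
    intro i
    simp [EuclideanSpace.inner_single_right]
  rw [hsingle 0, hsingle 1]
  simp only [PiLp.add_apply, PiLp.smul_apply, EuclideanSpace.single_apply, smul_eq_mul]
  norm_num
  have hfinal : 4 * g1 s + 4 * s * g2 s = u x := by
    rw [hu x]
    simp only [hg1, hg2, hP, hQ, ha, hb, hK, hsr]
    linear_combination main_id j A B c ‖x‖ hr
  rw [← hfinal]
  linear_combination (4 * g2 s) * hx0
end
end

section
/- Let m be a natural number with m ≥ 1. Then at every point x ≠ 0 of ℝ² (EuclideanSpace ℝ 2), the function x ↦ ‖x‖^{2m}·ln‖x‖ is twice differentiable and Δ(‖x‖^{2m}·ln‖x‖) = 4m²·‖x‖^{2m−2}·ln‖x‖ + 4m·‖x‖^{2m−2}, and likewise Δ(‖x‖^{2m}) = 4m²·‖x‖^{2m−2}. (These are the two Laplacian evaluations underlying the recursion formulas A_{j+1} = A_j/(4(j+1)²) and B_{j+1} = (A_j/(j+1) + B_j)/(4(j+1)²) for the higher-order fundamental solutions of the 2D Laplace operator.) -/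
open scoped RealInnerProductSpace
open Real

noncomputable section

local notation "E" => EuclideanSpace ℝ (Fin 2)

lemma hasFDerivAt_normSq (x : E) :
    HasFDerivAt (fun y : E => ‖y‖ ^ 2) ((2:ℝ) • innerSL ℝ x) x := by
  have h := (hasFDerivAt_id x).inner ℝ (hasFDerivAt_id x)
  have he : (fun y : E => ‖y‖ ^ 2) = fun y : E => ⟪y, y⟫ := by
    funext y; rw [real_inner_self_eq_norm_sq]
  rw [he]
  refine h.congr_fderiv ?_
  ext v
  simp [fderivInnerCLM_apply, two_smul, real_inner_comm]

lemma hasFDerivAt_comp_normSq (g : ℝ → ℝ) (d : ℝ) (x : E)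
    (hg : HasDerivAt g d (‖x‖ ^ 2)) :
    HasFDerivAt (fun y : E => g (‖y‖ ^ 2)) (d • ((2:ℝ) • innerSL ℝ x)) x :=
  hg.comp_hasFDerivAt x (hasFDerivAt_normSq x)

lemma hasGradientAt_comp_normSq (g : ℝ → ℝ) (d : ℝ) (x : E)
    (hg : HasDerivAt g d (‖x‖ ^ 2)) :
    HasGradientAt (fun y : E => g (‖y‖ ^ 2)) ((2 * d) • x) x := by
  rw [hasGradientAt_iff_hasFDerivAt]
  refine (hasFDerivAt_comp_normSq g d x hg).congr_fderiv ?_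
  ext v
  simp [InnerProductSpace.toDual, inner_smul_left, real_inner_comm]
  ring

lemma trace_smulRight (ℓ : E →L[ℝ] ℝ) (v : E) :
    LinearMap.trace ℝ E (ℓ.smulRight v).toLinearMap = ℓ v := by
  have h1 : (ℓ.smulRight v).toLinearMap
      = (LinearMap.toSpanSingleton ℝ E v).comp (ℓ : E →ₗ[ℝ] ℝ) := by
    ext w; simp [LinearMap.toSpanSingleton]
  rw [h1, LinearMap.trace_comp_comm']
  have h2 : (ℓ : E →ₗ[ℝ] ℝ).comp (LinearMap.toSpanSingleton ℝ E v)
      = ℓ v • LinearMap.id := by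
    ext
    simp [LinearMap.toSpanSingleton, mul_comm]
  rw [h2, map_smul, LinearMap.trace_id, Module.finrank_self]
  simp

lemma trace_second (a : ℝ) (ℓ : E →L[ℝ] ℝ) (v : E) :
    LinearMap.trace ℝ E ((a • ContinuousLinearMap.id ℝ E + ℓ.smulRight v) :
      E →L[ℝ] E).toLinearMap = 2 * a + ℓ v := by
  have : ((a • ContinuousLinearMap.id ℝ E + ℓ.smulRight v) : E →L[ℝ] E).toLinearMap
      = a • LinearMap.id + (ℓ.smulRight v).toLinearMap := by
    ext w; simp
  rw [this, map_add, map_smul, LinearMap.trace_id, trace_smulRight]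
  simp [finrank_euclideanSpace_fin]
  ring

end


noncomputable section
local notation "E" => EuclideanSpace ℝ (Fin 2)

lemma main_aux (g d : ℝ → ℝ) (c' : ℝ) (x : E) (hx : x ≠ 0)
    (h1 : ∀ t : ℝ, 0 < t → HasDerivAt g (d t) t)
    (h2 : HasDerivAt (fun t => 2 * d t) c' (‖x‖ ^ 2)) :
    DifferentiableAt ℝ (fun y : E => g (‖y‖ ^ 2)) x ∧
      DifferentiableAt ℝ (gradient fun y : E => g (‖y‖ ^ 2)) x ∧
      LinearMap.trace ℝ E
          (fderiv ℝ (gradient fun y : E => g (‖y‖ ^ 2)) x).toLinearMap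
        = 2 * (2 * d (‖x‖ ^ 2)) + c' * (2 * ‖x‖ ^ 2) := by
  have ht₀ : (0:ℝ) < ‖x‖ ^ 2 := pow_pos (norm_pos_iff.mpr hx) 2
  have hgrad := hasGradientAt_comp_normSq g (d (‖x‖ ^ 2)) x (h1 _ ht₀)
  have heq : (gradient fun y : E => g (‖y‖ ^ 2)) =ᶠ[nhds x]
      fun y : E => (2 * d (‖y‖ ^ 2)) • y := by
    filter_upwards [(isOpen_compl_singleton).mem_nhds hx] with y hy
    have hy0 : y ≠ 0 := hy
    have : (0:ℝ) < ‖y‖ ^ 2 := pow_pos (norm_pos_iff.mpr hy0) 2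
    exact (hasGradientAt_comp_normSq g (d (‖y‖ ^ 2)) y (h1 _ this)).gradient
  have hH : HasFDerivAt (fun y : E => (2 * d (‖y‖ ^ 2)) • y)
      ((2 * d (‖x‖ ^ 2)) • ContinuousLinearMap.id ℝ E
        + (c' • ((2:ℝ) • innerSL ℝ x)).smulRight x) x :=
    (hasFDerivAt_comp_normSq (fun t => 2 * d t) c' x h2).smul (hasFDerivAt_id x)
  refine ⟨hgrad.differentiableAt, hH.differentiableAt.congr_of_eventuallyEq heq, ?_⟩
  rw [heq.fderiv_eq, hH.fderiv, trace_second]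
  have hin : (innerSL ℝ x) x = ‖x‖ ^ 2 := real_inner_self_eq_norm_sq x
  simp only [ContinuousLinearMap.smul_apply, hin, smul_eq_mul]

lemma pow_pred_mul (k : ℕ) (t : ℝ) : (k:ℝ) * t ^ (k - 1) * t = k * t ^ k := by
  cases k with
  | zero => simp
  | succ n => rw [Nat.succ_sub_one]; push_cast; rw [pow_succ]; ring

end


noncomputable section
local notation "E" => EuclideanSpace ℝ (Fin 2)

/-- The two Laplacian evaluations underlying the recursion for the higher-order fundamental
solutions of the 2D Laplace operator: for `m ≥ 1` and `x ≠ 0` in `ℝ²`, the functions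
`x ↦ ‖x‖^(2m)·ln‖x‖` and `x ↦ ‖x‖^(2m)` are twice differentiable at `x` and
`Δ(‖x‖^(2m)·ln‖x‖) = 4m²·‖x‖^(2m−2)·ln‖x‖ + 4m·‖x‖^(2m−2)` and
`Δ(‖x‖^(2m)) = 4m²·‖x‖^(2m−2)`, the Laplacian being the trace of the second derivative. -/
theorem stmt9 (m : ℕ) (hm : 1 ≤ m) :
    ∀ x : EuclideanSpace ℝ (Fin 2), x ≠ 0 →
      (DifferentiableAt ℝ (fun y : EuclideanSpace ℝ (Fin 2) => ‖y‖ ^ (2 * m) * Real.log ‖y‖) x ∧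
        DifferentiableAt ℝ
          (gradient (fun y : EuclideanSpace ℝ (Fin 2) => ‖y‖ ^ (2 * m) * Real.log ‖y‖)) x ∧
        LinearMap.trace ℝ (EuclideanSpace ℝ (Fin 2))
            (fderiv ℝ
              (gradient (fun y : EuclideanSpace ℝ (Fin 2) => ‖y‖ ^ (2 * m) * Real.log ‖y‖))
              x).toLinearMap
          = 4 * (m : ℝ) ^ 2 * ‖x‖ ^ (2 * m - 2) * Real.log ‖x‖
            + 4 * (m : ℝ) * ‖x‖ ^ (2 * m - 2)) ∧
      (DifferentiableAt ℝ (fun y : EuclideanSpace ℝ (Fin 2) => ‖y‖ ^ (2 * m)) x ∧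
        DifferentiableAt ℝ
          (gradient (fun y : EuclideanSpace ℝ (Fin 2) => ‖y‖ ^ (2 * m))) x ∧
        LinearMap.trace ℝ (EuclideanSpace ℝ (Fin 2))
            (fderiv ℝ
              (gradient (fun y : EuclideanSpace ℝ (Fin 2) => ‖y‖ ^ (2 * m))) x).toLinearMap
          = 4 * (m : ℝ) ^ 2 * ‖x‖ ^ (2 * m - 2)) := by
  obtain ⟨k, rfl⟩ : ∃ k, m = k + 1 := ⟨m - 1, (Nat.succ_pred_eq_of_pos hm).symm⟩
  intro x hx
  have hnx : (0:ℝ) < ‖x‖ := norm_pos_iff.mpr hx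
  have ht₀ : (0:ℝ) < ‖x‖ ^ 2 := pow_pos hnx 2
  have hexp : 2 * (k + 1) - 2 = 2 * k := by omega
  have hpow : ‖x‖ ^ (2 * (k + 1) - 2) = (‖x‖ ^ 2) ^ k := by
    rw [hexp, pow_mul]
  have hlog : Real.log (‖x‖ ^ 2) = 2 * Real.log ‖x‖ := by
    rw [Real.log_pow]; push_cast; ring
  constructor
  · -- the log function
    have hfun : (fun y : E => ‖y‖ ^ (2 * (k + 1)) * Real.log ‖y‖)
        = fun y : E => (‖y‖ ^ 2) ^ (k + 1) * (Real.log (‖y‖ ^ 2) / 2) := by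
      funext y
      rw [pow_mul, Real.log_pow]
      push_cast; ring
    have h1 : ∀ t : ℝ, 0 < t →
        HasDerivAt (fun t : ℝ => t ^ (k + 1) * (Real.log t / 2))
          ((((k:ℝ)+1) * t ^ k) * (Real.log t / 2) + t ^ k / 2) t := by
      intro t ht
      have h := (hasDerivAt_pow (k + 1) t).mul ((Real.hasDerivAt_log ht.ne').div_const 2)
      refine h.congr_deriv ?_
      rw [pow_succ]
      push_cast [Nat.add_sub_cancel]
      field_simp
    have h2 : HasDerivAt
        (fun t : ℝ => 2 * ((((k:ℝ)+1) * t ^ k) * (Real.log t / 2) + t ^ k / 2))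
        (2 * (((((k:ℝ)+1) * ((k:ℝ) * (‖x‖ ^ 2) ^ (k - 1))) * (Real.log (‖x‖ ^ 2) / 2)
          + (((k:ℝ)+1) * (‖x‖ ^ 2) ^ k) * ((‖x‖ ^ 2)⁻¹ / 2))
          + ((k:ℝ) * (‖x‖ ^ 2) ^ (k - 1)) / 2)) (‖x‖ ^ 2) := by
      exact ((((hasDerivAt_pow k _).const_mul ((k:ℝ)+1)).mul
        ((Real.hasDerivAt_log ht₀.ne').div_const 2)).add
        ((hasDerivAt_pow k _).div_const 2)).const_mul 2
    obtain ⟨hd1, hd2, htr⟩ := main_aux _ _ _ x hx h1 h2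
    rw [hfun]
    refine ⟨hd1, hd2, ?_⟩
    rw [htr, hpow, hlog]
    have hp := pow_pred_mul k (‖x‖ ^ 2)
    have hinv : (‖x‖ ^ 2) * (‖x‖ ^ 2)⁻¹ = 1 := mul_inv_cancel₀ ht₀.ne'
    push_cast
    linear_combination (4 * Real.log ‖x‖ * ((k:ℝ)+1)) * hp + 2 * hp
      + (2 * ((k:ℝ)+1) * (‖x‖^2)^k) * hinv
  · -- the pure power function
    have hfun : (fun y : E => ‖y‖ ^ (2 * (k + 1)))
        = fun y : E => (‖y‖ ^ 2) ^ (k + 1) := by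
      funext y; rw [pow_mul]
    have h1 : ∀ t : ℝ, 0 < t →
        HasDerivAt (fun t : ℝ => t ^ (k + 1)) (((k:ℝ)+1) * t ^ k) t := by
      intro t _
      have h := hasDerivAt_pow (k + 1) t
      refine h.congr_deriv ?_
      push_cast [Nat.add_sub_cancel]
      ring
    have h2 : HasDerivAt (fun t : ℝ => 2 * (((k:ℝ)+1) * t ^ k))
        (2 * (((k:ℝ)+1) * ((k:ℝ) * (‖x‖ ^ 2) ^ (k - 1)))) (‖x‖ ^ 2) :=
      ((hasDerivAt_pow k _).const_mul ((k:ℝ)+1)).const_mul 2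
    obtain ⟨hd1, hd2, htr⟩ := main_aux _ _ _ x hx h1 h2
    rw [hfun]
    refine ⟨hd1, hd2, ?_⟩
    rw [htr, hpow]
    have hp := pow_pred_mul k (‖x‖ ^ 2)
    push_cast
    linear_combination (4 * ((k:ℝ)+1)) * hp

end
end
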